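/- arXiv:2602.00172 — 2 statements merged into one kernel-verified Lean document; each statement's English description precedes it below -/
import Mathlib

section
/- Let z = (z₁, z₂) be a standard two-dimensional Gaussian, and let y = -sgn(z₁z₂). Then conditioned on y = 1, E[z₁z₂ | y=1] = -2/π, and conditioned on y = -1, E[z₁z₂ | y=-1] = 2/π; moreover E[z₁² | y=±1] = E[z₂² | y=±1] = 1. -/
open MeasureTheory ProbabilityTheory Real

section Aux
open Set Filter

lemma J0 : ∫ x in Ioi (0:ℝ), exp (-2⁻¹ * x^2) = √(2*π)/2 := by
  have h := integral_gaussian_Ioi (2⁻¹ : ℝ)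
  rw [h]
  norm_num
  ring

lemma tendstoAux : Tendsto (fun x : ℝ => -2⁻¹ * x^2) atTop atBot := by
  have h1 : Tendsto (fun x : ℝ => x^2) atTop atTop := tendsto_pow_atTop two_ne_zero
  have := h1.const_mul_atTop_of_neg (show (-2⁻¹:ℝ) < 0 by norm_num)
  exact this

lemma J1 : ∫ x in Ioi (0:ℝ), x * exp (-2⁻¹ * x^2) = 1 := by
  have hderiv : ∀ x ∈ Ici (0:ℝ), HasDerivAt (fun x : ℝ => -exp (-2⁻¹ * x^2))
      (x * exp (-2⁻¹ * x^2)) x := by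
    intro x _
    have h : HasDerivAt (fun x : ℝ => -2⁻¹ * x^2) (-2⁻¹ * (2*x)) x :=
      (hasDerivAt_pow 2 x).const_mul _ |>.congr_deriv (by ring_nf)
    have : HasDerivAt (fun x : ℝ => -exp (-2⁻¹ * x^2)) (-(exp (-2⁻¹ * x^2) * (-2⁻¹ * (2*x)))) x :=
      (h.exp).neg
    convert this using 1
    ring
  have hint : IntegrableOn (fun x : ℝ => x * exp (-2⁻¹ * x^2)) (Ioi 0) :=
    (integrable_mul_exp_neg_mul_sq (by norm_num : (0:ℝ) < 2⁻¹)).integrableOn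
  have htend : Tendsto (fun x : ℝ => -exp (-2⁻¹ * x^2)) atTop (nhds 0) := by
    have := (Real.tendsto_exp_atBot.comp tendstoAux).neg
    simpa using this
  have := MeasureTheory.integral_Ioi_of_hasDerivAt_of_tendsto' hderiv hint htend
  simpa using this

lemma intSq : IntegrableOn (fun x : ℝ => x^2 * exp (-2⁻¹ * x^2)) (Ioi 0) := by
  have := integrableOn_rpow_mul_exp_neg_mul_sq (show (0:ℝ) < 2⁻¹ by norm_num)
    (show (-1:ℝ) < 2 by norm_num)
  simpa [Real.rpow_natCast] using this

lemma intE : IntegrableOn (fun x : ℝ => exp (-2⁻¹ * x^2)) (Ioi 0) :=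
  (integrable_exp_neg_mul_sq (by norm_num : (0:ℝ) < 2⁻¹)).integrableOn

lemma J2 : ∫ x in Ioi (0:ℝ), x^2 * exp (-2⁻¹ * x^2) = √(2*π)/2 := by
  have hderiv : ∀ x ∈ Ici (0:ℝ), HasDerivAt (fun x : ℝ => -(x * exp (-2⁻¹ * x^2)))
      (x^2 * exp (-2⁻¹ * x^2) - exp (-2⁻¹ * x^2)) x := by
    intro x _
    have h : HasDerivAt (fun x : ℝ => -2⁻¹ * x^2) (-2⁻¹ * (2*x)) x :=
      (hasDerivAt_pow 2 x).const_mul _ |>.congr_deriv (by ring_nf)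
    have : HasDerivAt (fun x : ℝ => -(x * exp (-2⁻¹ * x^2)))
        (-(1 * exp (-2⁻¹ * x^2) + id x * (exp (-2⁻¹ * x^2) * (-2⁻¹ * (2*x))))) x :=
      ((hasDerivAt_id x).mul h.exp).neg
    convert this using 1
    simp only [id]
    ring
  have hint : IntegrableOn
      (fun x : ℝ => x^2 * exp (-2⁻¹ * x^2) - exp (-2⁻¹ * x^2)) (Ioi 0) :=
    intSq.sub intE
  have htend : Tendsto (fun x : ℝ => -(x * exp (-2⁻¹ * x^2))) atTop (nhds 0) := by
    have hlo := rpow_mul_exp_neg_mul_sq_isLittleO_exp_neg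
      (show (0:ℝ) < 2⁻¹ by norm_num) 1
    have hg : Tendsto (fun x : ℝ => exp (-(1/2) * x)) atTop (nhds 0) := by
      apply Real.tendsto_exp_atBot.comp
      have := (tendsto_id (α := ℝ)).const_mul_atTop_of_neg
        (show (-(1/2):ℝ) < 0 by norm_num)
      exact this
    have := hlo.isBigO.trans_tendsto hg
    simp only [Real.rpow_one] at this
    simpa using this.neg
  have h0 := MeasureTheory.integral_Ioi_of_hasDerivAt_of_tendsto' hderiv hint htend
  simp only [mul_zero, zero_mul, Real.exp_zero, mul_one, neg_zero, sub_zero, zero_sub, neg_neg,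
    zero_pow] at h0
  have := MeasureTheory.integral_sub intSq intE
  rw [this] at h0
  have h1 : ∫ x in Ioi (0:ℝ), x^2 * exp (-2⁻¹ * x^2) = ∫ x in Ioi (0:ℝ), exp (-2⁻¹ * x^2) := by
    linarith [h0]
  rw [h1, J0]

lemma pdf_eq (x : ℝ) :
    gaussianPDFReal 0 1 x = (√(2*π))⁻¹ * exp (-2⁻¹ * x^2) := by
  simp only [gaussianPDFReal, NNReal.coe_one, mul_one, sub_zero]
  congr 1
  ring

lemma pdf_even (x : ℝ) : gaussianPDFReal 0 1 (-x) = gaussianPDFReal 0 1 x := by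
  simp [pdf_eq]

lemma transfer (s : Set ℝ) (hs : MeasurableSet s) (g : ℝ → ℝ) :
    ∫ x in s, g x ∂(gaussianReal 0 1) = ∫ x in s, gaussianPDFReal 0 1 x * g x := by
  rw [gaussianReal_of_var_ne_zero 0 one_ne_zero]
  have h := setIntegral_withDensity_eq_setIntegral_smul
    (f := fun x => (gaussianPDFReal 0 1 x).toNNReal)
    ((measurable_gaussianPDFReal 0 1).real_toNNReal) g hs (μ := volume)
  rw [show (gaussianPDF 0 1) = (fun x => ((gaussianPDFReal 0 1 x).toNNReal : ENNReal)) from rfl]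
  rw [h]
  refine setIntegral_congr_fun hs (fun x _ => ?_)
  simp [NNReal.smul_def, Real.coe_toNNReal _ (gaussianPDFReal_nonneg 0 1 x)]

lemma sqrt2pi_pos : (0:ℝ) < √(2*π) := Real.sqrt_pos.mpr (by positivity)

lemma Gpos_pdf : ∫ x in Ioi (0:ℝ), gaussianPDFReal 0 1 x = 1/2 := by
  simp only [pdf_eq]
  rw [MeasureTheory.integral_const_mul, J0]
  field_simp

-- reflection: integral over Iio 0 equals integral over Ioi 0 of reflected function
lemma reflect (g : ℝ → ℝ) :
    ∫ x in Iio (0:ℝ), gaussianPDFReal 0 1 x * g x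
      = ∫ x in Ioi (0:ℝ), gaussianPDFReal 0 1 x * g (-x) := by
  have h := integral_comp_neg_Iic (0:ℝ) (fun y => gaussianPDFReal 0 1 y * g (-y))
  simp only [neg_neg, neg_zero] at h
  rw [← MeasureTheory.integral_Iic_eq_integral_Iio, ← h]
  refine setIntegral_congr_fun measurableSet_Iic (fun x _ => ?_)
  rw [pdf_even]

lemma Gpos_id : ∫ x in Ioi (0:ℝ), x ∂(gaussianReal 0 1) = (√(2*π))⁻¹ := by
  rw [transfer _ measurableSet_Ioi]
  simp only [pdf_eq, mul_assoc]
  rw [show (fun x => (√(2*π))⁻¹ * (exp (-2⁻¹ * x^2) * x)) =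
      (fun x => (√(2*π))⁻¹ * (x * exp (-2⁻¹ * x^2))) from funext fun x => by ring]
  rw [MeasureTheory.integral_const_mul, J1, mul_one]

lemma Gneg_id : ∫ x in Iio (0:ℝ), x ∂(gaussianReal 0 1) = -(√(2*π))⁻¹ := by
  rw [transfer _ measurableSet_Iio, reflect]
  rw [show (fun x => gaussianPDFReal 0 1 x * (-x)) =
      (fun x => -(gaussianPDFReal 0 1 x * x)) from funext fun x => by ring]
  rw [MeasureTheory.integral_neg]
  have := Gpos_id
  rw [transfer _ measurableSet_Ioi] at this
  rw [this]

lemma Gpos_sq : ∫ x in Ioi (0:ℝ), x^2 ∂(gaussianReal 0 1) = 1/2 := by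
  rw [transfer _ measurableSet_Ioi]
  simp only [pdf_eq, mul_assoc]
  rw [show (fun x => (√(2*π))⁻¹ * (exp (-2⁻¹ * x^2) * x^2)) =
      (fun x => (√(2*π))⁻¹ * (x^2 * exp (-2⁻¹ * x^2))) from funext fun x => by ring]
  rw [MeasureTheory.integral_const_mul, J2]
  field_simp

lemma Gneg_sq : ∫ x in Iio (0:ℝ), x^2 ∂(gaussianReal 0 1) = 1/2 := by
  rw [transfer _ measurableSet_Iio, reflect]
  simp only [neg_pow, neg_neg, pow_two, neg_mul, neg_neg, mul_neg]
  have := Gpos_sq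
  rw [transfer _ measurableSet_Ioi] at this
  rw [← this]
  refine setIntegral_congr_fun measurableSet_Ioi (fun x _ => ?_)
  ring

lemma meas_pos : gaussianReal 0 1 (Ioi 0) = 1/2 := by
  rw [gaussianReal_apply_eq_integral 0 one_ne_zero, Gpos_pdf]
  rw [ENNReal.ofReal_div_of_pos (by norm_num)]
  norm_num

lemma meas_neg : gaussianReal 0 1 (Iio 0) = 1/2 := by
  rw [gaussianReal_apply_eq_integral 0 one_ne_zero]
  have : ∫ x in Iio (0:ℝ), gaussianPDFReal 0 1 x = 1/2 := by
    have h := reflect (fun _ => 1)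
    simp only [mul_one] at h
    rw [h, Gpos_pdf]
  rw [this, ENNReal.ofReal_div_of_pos (by norm_num)]
  norm_num

lemma int_gauss (g : ℝ → ℝ) (h : Integrable (fun x => gaussianPDFReal 0 1 x * g x) volume) :
    Integrable g (gaussianReal 0 1) := by
  rw [gaussianReal_of_var_ne_zero 0 one_ne_zero]
  rw [show (gaussianPDF 0 1) = (fun x => ((gaussianPDFReal 0 1 x).toNNReal : ENNReal)) from rfl]
  rw [integrable_withDensity_iff_integrable_smul ((measurable_gaussianPDFReal 0 1).real_toNNReal)]
  refine h.congr (ae_of_all _ fun x => ?_)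
  simp [NNReal.smul_def, Real.coe_toNNReal _ (gaussianPDFReal_nonneg 0 1 x)]

lemma int_id : Integrable (fun x : ℝ => x) (gaussianReal 0 1) := by
  apply int_gauss
  have := (integrable_mul_exp_neg_mul_sq (by norm_num : (0:ℝ) < 2⁻¹)).const_mul (√(2*π))⁻¹
  refine this.congr (ae_of_all _ fun x => ?_)
  simp only [pdf_eq]; ring

lemma int_sq : Integrable (fun x : ℝ => x^2) (gaussianReal 0 1) := by
  apply int_gauss
  have h2 : Integrable (fun x : ℝ => x^2 * exp (-2⁻¹ * x^2)) volume := by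
    have := integrable_rpow_mul_exp_neg_mul_sq (show (0:ℝ) < 2⁻¹ by norm_num)
      (show (-1:ℝ) < 2 by norm_num)
    simpa [Real.rpow_natCast] using this
  have := h2.const_mul (√(2*π))⁻¹
  refine this.congr (ae_of_all _ fun x => ?_)
  simp only [pdf_eq]; ring

end Aux

noncomputable def stdGaussian2 : Measure (ℝ × ℝ) :=
  (gaussianReal 0 1).prod (gaussianReal 0 1)

section Aux2
open Set Filter

lemma Sneg_eq : {p : ℝ × ℝ | p.1 * p.2 < 0} = (Ioi 0 ×ˢ Iio 0) ∪ (Iio 0 ×ˢ Ioi 0) := by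
  ext p
  simp only [Set.mem_setOf_eq, Set.mem_union, Set.mem_prod, mem_Ioi, mem_Iio, mul_neg_iff]

lemma Spos_eq : {p : ℝ × ℝ | 0 < p.1 * p.2} = (Ioi 0 ×ˢ Ioi 0) ∪ (Iio 0 ×ˢ Iio 0) := by
  ext p
  simp only [Set.mem_setOf_eq, Set.mem_union, Set.mem_prod, mem_Ioi, mem_Iio, mul_pos_iff]

lemma dneg : Disjoint ((Ioi 0 ×ˢ Iio 0 : Set (ℝ × ℝ))) (Iio 0 ×ˢ Ioi 0) :=
  Set.disjoint_left.mpr fun p hp hq => lt_asymm (mem_Ioi.mp hp.1) (mem_Iio.mp hq.1)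

lemma dpos : Disjoint ((Ioi 0 ×ˢ Ioi 0 : Set (ℝ × ℝ))) (Iio 0 ×ˢ Iio 0) :=
  Set.disjoint_left.mpr fun p hp hq => lt_asymm (mem_Ioi.mp hp.1) (mem_Iio.mp hq.1)

lemma mprodIoiIio : MeasurableSet ((Ioi 0 ×ˢ Iio 0 : Set (ℝ × ℝ))) :=
  measurableSet_Ioi.prod measurableSet_Iio
lemma mprodIioIoi : MeasurableSet ((Iio 0 ×ˢ Ioi 0 : Set (ℝ × ℝ))) :=
  measurableSet_Iio.prod measurableSet_Ioi
lemma mprodIoiIoi : MeasurableSet ((Ioi 0 ×ˢ Ioi 0 : Set (ℝ × ℝ))) :=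
  measurableSet_Ioi.prod measurableSet_Ioi
lemma mprodIioIio : MeasurableSet ((Iio 0 ×ˢ Iio 0 : Set (ℝ × ℝ))) :=
  measurableSet_Iio.prod measurableSet_Iio

lemma half_arith : (1/2 : ENNReal) * (1/2) + 1/2 * (1/2) = 1/2 := by
  have h : (1/2 : ENNReal) = ENNReal.ofReal (1/2) := by
    rw [ENNReal.ofReal_div_of_pos] <;> norm_num
  rw [h, ← ENNReal.ofReal_mul (by norm_num), ← ENNReal.ofReal_add (by norm_num) (by norm_num)]
  norm_num

lemma measSneg : stdGaussian2 {p : ℝ × ℝ | p.1 * p.2 < 0} = 1/2 := by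
  rw [Sneg_eq, measure_union dneg mprodIioIoi]
  show (gaussianReal 0 1).prod (gaussianReal 0 1) _ + (gaussianReal 0 1).prod (gaussianReal 0 1) _ = _
  rw [Measure.prod_prod, Measure.prod_prod, meas_pos, meas_neg]
  exact half_arith

lemma measSpos : stdGaussian2 {p : ℝ × ℝ | 0 < p.1 * p.2} = 1/2 := by
  rw [Spos_eq, measure_union dpos mprodIioIio]
  show (gaussianReal 0 1).prod (gaussianReal 0 1) _ + (gaussianReal 0 1).prod (gaussianReal 0 1) _ = _
  rw [Measure.prod_prod, Measure.prod_prod, meas_pos, meas_neg]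
  exact half_arith

lemma half_toReal : ((1/2 : ENNReal)).toReal = 1/2 := by norm_num

lemma hprod_mul (s t : Set ℝ) : ∫ p in s ×ˢ t, p.1 * p.2 ∂stdGaussian2
    = (∫ x in s, x ∂(gaussianReal 0 1)) * (∫ y in t, y ∂(gaussianReal 0 1)) :=
  setIntegral_prod_mul (fun x => x) (fun y => y) s t

lemma hprod_sq1 (s t : Set ℝ) : ∫ p in s ×ˢ t, p.1^2 ∂stdGaussian2
    = (∫ x in s, x^2 ∂(gaussianReal 0 1)) * ((gaussianReal 0 1) t).toReal := by
  have h1 : ∫ p in s ×ˢ t, p.1^2 ∂stdGaussian2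
      = ∫ p in s ×ˢ t, (fun x => x^2) p.1 * (fun _ => (1:ℝ)) p.2 ∂stdGaussian2 := by
    simp
  rw [h1]
  exact (setIntegral_prod_mul (fun x => x^2) (fun _ => (1:ℝ)) s t).trans (by simp [measureReal_def])

lemma hprod_sq2 (s t : Set ℝ) : ∫ p in s ×ˢ t, p.2^2 ∂stdGaussian2
    = ((gaussianReal 0 1) s).toReal * (∫ y in t, y^2 ∂(gaussianReal 0 1)) := by
  have h1 : ∫ p in s ×ˢ t, p.2^2 ∂stdGaussian2
      = ∫ p in s ×ˢ t, (fun _ => (1:ℝ)) p.1 * (fun y => y^2) p.2 ∂stdGaussian2 := by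
    simp
  rw [h1]
  exact (setIntegral_prod_mul (fun _ => (1:ℝ)) (fun y => y^2) s t).trans (by simp [measureReal_def])

lemma Imul : Integrable (fun p : ℝ × ℝ => p.1 * p.2) stdGaussian2 := int_id.mul_prod int_id
lemma Isq1 : Integrable (fun p : ℝ × ℝ => p.1^2) stdGaussian2 := by
  simpa [stdGaussian2] using int_sq.mul_prod (integrable_const (1:ℝ))
lemma Isq2 : Integrable (fun p : ℝ × ℝ => p.2^2) stdGaussian2 := by
  simpa [stdGaussian2] using (integrable_const (1:ℝ)).mul_prod int_sq

lemma hcc : (√(2*π))⁻¹ * (√(2*π))⁻¹ = (2*π)⁻¹ := by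
  rw [← mul_inv, Real.mul_self_sqrt (by positivity)]


end Aux2

/-- XOR conditional moments: conditioning on y = 1 (i.e. z₁z₂ < 0) and y = -1
(i.e. z₁z₂ > 0). -/
theorem xor_conditional_moments :
    (∫ p in {p : ℝ × ℝ | p.1 * p.2 < 0}, p.1 * p.2 ∂stdGaussian2) /
      (stdGaussian2 {p : ℝ × ℝ | p.1 * p.2 < 0}).toReal = -2/π ∧
    (∫ p in {p : ℝ × ℝ | 0 < p.1 * p.2}, p.1 * p.2 ∂stdGaussian2) /
      (stdGaussian2 {p : ℝ × ℝ | 0 < p.1 * p.2}).toReal = 2/π ∧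
    (∫ p in {p : ℝ × ℝ | p.1 * p.2 < 0}, p.1^2 ∂stdGaussian2) /
      (stdGaussian2 {p : ℝ × ℝ | p.1 * p.2 < 0}).toReal = 1 ∧
    (∫ p in {p : ℝ × ℝ | p.1 * p.2 < 0}, p.2^2 ∂stdGaussian2) /
      (stdGaussian2 {p : ℝ × ℝ | p.1 * p.2 < 0}).toReal = 1 ∧
    (∫ p in {p : ℝ × ℝ | 0 < p.1 * p.2}, p.1^2 ∂stdGaussian2) /
      (stdGaussian2 {p : ℝ × ℝ | 0 < p.1 * p.2}).toReal = 1 ∧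
    (∫ p in {p : ℝ × ℝ | 0 < p.1 * p.2}, p.2^2 ∂stdGaussian2) /
      (stdGaussian2 {p : ℝ × ℝ | 0 < p.1 * p.2}).toReal = 1 := by
  rw [measSneg, measSpos, half_toReal]
  refine ⟨?_, ?_, ?_, ?_, ?_, ?_⟩
  · rw [Sneg_eq, setIntegral_union dneg mprodIioIoi Imul.integrableOn Imul.integrableOn,
      hprod_mul, hprod_mul, Gpos_id, Gneg_id]
    have : (√(2*π))⁻¹ * -(√(2*π))⁻¹ + -(√(2*π))⁻¹ * (√(2*π))⁻¹ = -π⁻¹ := by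
      have h2 : (√(2*π))⁻¹ * -(√(2*π))⁻¹ + -(√(2*π))⁻¹ * (√(2*π))⁻¹
          = -(2 * ((√(2*π))⁻¹ * (√(2*π))⁻¹)) := by ring
      rw [h2, hcc, mul_inv]; ring
    rw [this]
    field_simp
  · rw [Spos_eq, setIntegral_union dpos mprodIioIio Imul.integrableOn Imul.integrableOn,
      hprod_mul, hprod_mul, Gpos_id, Gneg_id]
    have : (√(2*π))⁻¹ * (√(2*π))⁻¹ + -(√(2*π))⁻¹ * -(√(2*π))⁻¹ = π⁻¹ := by
      have h2 : (√(2*π))⁻¹ * (√(2*π))⁻¹ + -(√(2*π))⁻¹ * -(√(2*π))⁻¹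
          = 2 * ((√(2*π))⁻¹ * (√(2*π))⁻¹) := by ring
      rw [h2, hcc, mul_inv]; ring
    rw [this]
    field_simp
  · rw [Sneg_eq, setIntegral_union dneg mprodIioIoi Isq1.integrableOn Isq1.integrableOn,
      hprod_sq1, hprod_sq1, Gpos_sq, Gneg_sq, meas_pos, meas_neg, half_toReal]
    norm_num
  · rw [Sneg_eq, setIntegral_union dneg mprodIioIoi Isq2.integrableOn Isq2.integrableOn,
      hprod_sq2, hprod_sq2, Gpos_sq, Gneg_sq, meas_pos, meas_neg, half_toReal]
    norm_num
  · rw [Spos_eq, setIntegral_union dpos mprodIioIio Isq1.integrableOn Isq1.integrableOn,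
      hprod_sq1, hprod_sq1, Gpos_sq, Gneg_sq, meas_pos, meas_neg, half_toReal]
    norm_num
  · rw [Spos_eq, setIntegral_union dpos mprodIioIio Isq2.integrableOn Isq2.integrableOn,
      hprod_sq2, hprod_sq2, Gpos_sq, Gneg_sq, meas_pos, meas_neg, half_toReal]
    norm_num
end

section
/- Let X₁, X₂ be independent standard normal random variables. There exists a constant C > 0 such that for all N ≥ 2, E[e^{-N·||X₁|-|X₂||}] ≤ C·(log N)/N. -/
open MeasureTheory ProbabilityTheory Real

lemma gaussianPDF_le_half (x : ℝ) : gaussianPDF 0 1 x ≤ ENNReal.ofReal (1/2) := by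
  rw [gaussianPDF]
  apply ENNReal.ofReal_le_ofReal
  rw [gaussianPDFReal, NNReal.coe_one]
  have h1 : rexp (-(x - 0)^2 / (2 * 1)) ≤ 1 := by
    rw [Real.exp_le_one_iff]
    have : (0:ℝ) ≤ (x - 0)^2 := sq_nonneg _
    rw [neg_div]
    simp only [Left.neg_nonpos_iff]
    positivity
  have hπ : (4:ℝ) ≤ 2 * π * 1 := by nlinarith [Real.pi_gt_three]
  have h2 : (2:ℝ) ≤ √(2 * π * 1) := by
    have h4 : √(4:ℝ) = 2 := by
      rw [show (4:ℝ) = 2^2 by norm_num, Real.sqrt_sq (by norm_num : (0:ℝ) ≤ 2)]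
    calc (2:ℝ) = √4 := h4.symm
      _ ≤ √(2 * π * 1) := Real.sqrt_le_sqrt hπ
  have hinv : (√(2 * π * 1))⁻¹ ≤ 1/2 := by
    rw [one_div]
    exact inv_anti₀ (by norm_num) h2
  calc (√(2 * π * 1))⁻¹ * rexp (-(x - 0)^2 / (2 * 1))
      ≤ (√(2 * π * 1))⁻¹ * 1 := mul_le_mul_of_nonneg_left h1 (by positivity)
    _ ≤ 1/2 := by rw [mul_one]; exact hinv

lemma gauss_set_le (s : Set ℝ) :
    gaussianReal 0 1 s ≤ ENNReal.ofReal (1/2) * volume s := by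
  rcases exists_measurable_superset volume s with ⟨u, hsu, hu, huv⟩
  calc gaussianReal 0 1 s ≤ gaussianReal 0 1 u := measure_mono hsu
    _ = ∫⁻ x in u, gaussianPDF 0 1 x := gaussianReal_apply 0 one_ne_zero u
    _ ≤ ∫⁻ _ in u, ENNReal.ofReal (1/2) := by
        exact lintegral_mono fun x => gaussianPDF_le_half x
    _ = ENNReal.ofReal (1/2) * volume u := by rw [lintegral_const]; simp [mul_comm]
    _ = ENNReal.ofReal (1/2) * volume s := by rw [huv]

lemma slice_bound (y t : ℝ) (ht : 0 ≤ t) :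
    gaussianReal 0 1 {x : ℝ | |(|x| - |y|)| ≤ t} ≤ ENNReal.ofReal (2 * t) := by
  have hsub : {x : ℝ | |(|x| - |y|)| ≤ t} ⊆
      Set.Icc (|y| - t) (|y| + t) ∪ Set.Icc (-(|y| + t)) (-(|y| - t)) := by
    intro x hx
    simp only [Set.mem_setOf_eq, abs_le] at hx
    rcases le_or_gt 0 x with h | h
    · left
      rw [abs_of_nonneg h] at hx
      rw [Set.mem_Icc]
      exact ⟨by linarith [hx.1, hx.2], by linarith [hx.1, hx.2]⟩
    · right
      rw [abs_of_neg h] at hx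
      rw [Set.mem_Icc]
      exact ⟨by linarith [hx.1, hx.2], by linarith [hx.1, hx.2]⟩
  calc gaussianReal 0 1 {x : ℝ | |(|x| - |y|)| ≤ t}
      ≤ gaussianReal 0 1 (Set.Icc (|y| - t) (|y| + t)) +
        gaussianReal 0 1 (Set.Icc (-(|y| + t)) (-(|y| - t))) :=
        le_trans (measure_mono hsub) (measure_union_le _ _)
    _ ≤ ENNReal.ofReal (1/2) * volume (Set.Icc (|y| - t) (|y| + t)) +
        ENNReal.ofReal (1/2) * volume (Set.Icc (-(|y| + t)) (-(|y| - t))) :=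
        add_le_add (gauss_set_le _) (gauss_set_le _)
    _ ≤ ENNReal.ofReal (2 * t) := by
        rw [Real.volume_Icc, Real.volume_Icc]
        have h1 : |y| + t - (|y| - t) = 2 * t := by ring
        have h2 : -(|y| - t) - -(|y| + t) = 2 * t := by ring
        rw [h1, h2, ← ENNReal.ofReal_mul (by norm_num : (0:ℝ) ≤ 1/2)]
        rw [← ENNReal.ofReal_add (by positivity) (by positivity)]
        apply ENNReal.ofReal_le_ofReal
        linarith

theorem folded_diff_laplace_upper :
    ∃ C : ℝ, 0 < C ∧ ∀ N : ℝ, 2 ≤ N →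
      (∫ p, Real.exp (-N * abs (|p.1| - |p.2|)) ∂stdGaussian2) ≤ C * Real.log N / N := by
  refine ⟨4, by norm_num, fun N hN => ?_⟩
  have hN0 : (0:ℝ) < N := by linarith
  set t : ℝ := Real.log N / N with ht_def
  have hlogN : 0 < Real.log N := Real.log_pos (by linarith)
  have ht : 0 < t := div_pos hlogN hN0
  set A : Set (ℝ × ℝ) := {p : ℝ × ℝ | |(|p.1| - |p.2|)| ≤ t} with hA_def
  have hA_meas : MeasurableSet A := by
    apply measurableSet_le
    · exact (measurable_fst.abs.sub measurable_snd.abs).abs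
    · exact measurable_const
  have hprob : IsProbabilityMeasure stdGaussian2 := by
    unfold stdGaussian2; infer_instance
  -- measure of A bound
  have hA_bound : stdGaussian2 A ≤ ENNReal.ofReal (2 * t) := by
    rw [stdGaussian2, Measure.prod_apply hA_meas]
    calc ∫⁻ x, gaussianReal 0 1 (Prod.mk x ⁻¹' A) ∂(gaussianReal 0 1)
        ≤ ∫⁻ _, ENNReal.ofReal (2 * t) ∂(gaussianReal 0 1) := by
          apply lintegral_mono
          intro x
          have hpre : Prod.mk x ⁻¹' A = {y : ℝ | |(|y| - |x|)| ≤ t} := by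
            ext y; simp [hA_def, abs_sub_comm]
          dsimp only
          rw [hpre]
          exact slice_bound x t ht.le
      _ = ENNReal.ofReal (2 * t) := by simp
  -- pointwise bound
  have hpt : ∀ p : ℝ × ℝ, Real.exp (-N * |(|p.1| - |p.2|)|) ≤
      A.indicator (fun _ => (1:ℝ)) p + 1/N := by
    intro p
    by_cases hp : p ∈ A
    · rw [Set.indicator_of_mem hp]
      have : Real.exp (-N * |(|p.1| - |p.2|)|) ≤ 1 := by
        rw [Real.exp_le_one_iff]
        have := abs_nonneg (|p.1| - |p.2|)
        nlinarith
      have h1N : 0 < 1/N := by positivity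
      linarith
    · rw [Set.indicator_of_notMem hp, zero_add]
      have hp2 : t < |(|p.1| - |p.2|)| := by
        simpa [hA_def, Set.mem_setOf_eq, not_le] using hp
      have hle : -N * |(|p.1| - |p.2|)| ≤ -Real.log N := by
        have h3 : N * t ≤ N * |(|p.1| - |p.2|)| :=
          mul_le_mul_of_nonneg_left hp2.le hN0.le
        rw [ht_def, mul_div_cancel₀ _ hN0.ne'] at h3
        linarith
      calc Real.exp (-N * |(|p.1| - |p.2|)|) ≤ Real.exp (-Real.log N) :=
            Real.exp_le_exp.mpr hle
        _ = 1/N := by rw [Real.exp_neg, Real.exp_log hN0, one_div]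
  -- integrability
  have hf_meas : AEStronglyMeasurable (fun p : ℝ × ℝ =>
      Real.exp (-N * |(|p.1| - |p.2|)|)) stdGaussian2 := by
    apply Continuous.aestronglyMeasurable
    continuity
  have hf_int : Integrable (fun p : ℝ × ℝ =>
      Real.exp (-N * |(|p.1| - |p.2|)|)) stdGaussian2 := by
    apply Integrable.mono (integrable_const (1:ℝ)) hf_meas
    apply ae_of_all
    intro p
    rw [Real.norm_eq_abs, norm_one, abs_of_nonneg (Real.exp_nonneg _)]
    rw [Real.exp_le_one_iff]
    have := abs_nonneg (|p.1| - |p.2|)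
    nlinarith
  have hg_int : Integrable (fun p : ℝ × ℝ =>
      A.indicator (fun _ => (1:ℝ)) p + 1/N) stdGaussian2 := by
    apply Integrable.add
    · exact (integrable_const (1:ℝ)).indicator hA_meas
    · exact integrable_const _
  -- combine
  have hstep : (∫ p, Real.exp (-N * |(|p.1| - |p.2|)|) ∂stdGaussian2) ≤
      (stdGaussian2 A).toReal + 1/N := by
    calc (∫ p, Real.exp (-N * |(|p.1| - |p.2|)|) ∂stdGaussian2)
        ≤ ∫ p, (A.indicator (fun _ => (1:ℝ)) p + 1/N) ∂stdGaussian2 :=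
          integral_mono hf_int hg_int hpt
      _ = (stdGaussian2 A).toReal + 1/N := by
          rw [integral_add ((integrable_const (1:ℝ)).indicator hA_meas) (integrable_const _)]
          rw [integral_indicator_const _ hA_meas, integral_const]
          simp [smul_eq_mul, mul_comm]; rfl
  have hAr : (stdGaussian2 A).toReal ≤ 2 * t := by
    have := ENNReal.toReal_mono ENNReal.ofReal_ne_top hA_bound
    rwa [ENNReal.toReal_ofReal (by positivity)] at this
  have h1N : 1/N ≤ 2 * Real.log N / N := by
    have hlog2 : (0.6931471803 : ℝ) < Real.log 2 := Real.log_two_gt_d9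
    have hlogN2 : Real.log 2 ≤ Real.log N := Real.log_le_log (by norm_num) hN
    have h1 : (1:ℝ) ≤ 2 * Real.log N := by linarith
    rw [div_le_div_iff₀ hN0 hN0]
    nlinarith
  calc (∫ p, Real.exp (-N * |(|p.1| - |p.2|)|) ∂stdGaussian2)
      ≤ (stdGaussian2 A).toReal + 1/N := hstep
    _ ≤ 2 * t + 2 * Real.log N / N := add_le_add hAr h1N
    _ = 4 * Real.log N / N := by rw [ht_def]; ring
end
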